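/- arXiv:1311.0198 — 3 statements merged into one kernel-verified Lean document; each statement's English description precedes it below -/
import Mathlib

section
/- The maximum social welfare over all feasible allocations equals the sum of the k largest elements of the combined multiset of all ask values and all bid values, where k is the number of asks. -/
/-- Extract the minimum-value unmatched ask from a list, with a fixed
tie-breaking rule (earlier list positions are preferred). Returns the
minimum together with the remaining list. -/
noncomputable def extractMin : List ℝ → Option (ℝ × List ℝ)
  | [] => none
  | a :: as =>
    match extractMin as with
    | none => some (a, [])
    | some (m, rest) => if a ≤ m then some (a, as) else some (m, a :: rest)

/-- State of the Best-first (greedy) allocation: the currently unmatched asks,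
the matched (ask, bid) pairs in match order, and the unmatched bids. -/
structure BfState where
  unmatchedAsks : List ℝ
  matched : List (ℝ × ℝ)
  unmatchedBids : List ℝ

/-- One step of the Best-first allocation: when bid `b` arrives, match it to the
minimum unmatched ask `a` if `a ≤ b`; otherwise leave `b` unmatched. -/
noncomputable def bfStep (s : BfState) (b : ℝ) : BfState :=
  match extractMin s.unmatchedAsks with
  | some (a, rest) =>
      if a ≤ b then ⟨rest, s.matched ++ [(a, b)], s.unmatchedBids⟩
      else ⟨s.unmatchedAsks, s.matched, s.unmatchedBids ++ [b]⟩
  | none => ⟨s.unmatchedAsks, s.matched, s.unmatchedBids ++ [b]⟩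

/-- Run the Best-first allocation on the bids in arrival order. -/
noncomputable def bfRun (asks bids : List ℝ) : BfState :=
  bids.foldl bfStep ⟨asks, [], []⟩

/-- Insertion into an ascending-sorted list. -/
noncomputable def insertAsc (x : ℝ) : List ℝ → List ℝ
  | [] => [x]
  | y :: ys => if x ≤ y then x :: y :: ys else y :: insertAsc x ys

/-- Sort a list of reals in ascending order. -/
noncomputable def sortAsc (l : List ℝ) : List ℝ := l.foldr insertAsc []

/-- Sort a list of reals in descending order. -/
noncomputable def sortDesc (l : List ℝ) : List ℝ := (sortAsc l).reverse

/-- Match the i-th element of the first list with the i-th element of the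
second, stopping as soon as a pair is not matchable (`a ≤ b` fails). -/
noncomputable def matchPrefix : List ℝ → List ℝ → List (ℝ × ℝ)
  | a :: as, b :: bs => if a ≤ b then (a, b) :: matchPrefix as bs else []
  | _, _ => []

/-- The optimal allocation: match the highest bid with the lowest ask, the
second highest bid with the second lowest ask, and so on, stopping as soon as
a pair is not matchable. -/
noncomputable def optPairs (asks bids : List ℝ) : List (ℝ × ℝ) :=
  matchPrefix (sortAsc asks) (sortDesc bids)

/-- A feasible allocation: a partial matching (multiset of (ask, bid) pairs)
using each ask and each bid at most once, with `a ≤ b` for every matched pair. -/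
def IsFeasible (asks bids : List ℝ) (M : Multiset (ℝ × ℝ)) : Prop :=
  M.map Prod.fst ≤ (asks : Multiset ℝ) ∧
  M.map Prod.snd ≤ (bids : Multiset ℝ) ∧
  ∀ p ∈ M, p.1 ≤ p.2

/-- Social welfare of an allocation: sum of matched bid values plus the sum of
the values of the unmatched asks. -/
noncomputable def welfare (asks : List ℝ) (M : Multiset (ℝ × ℝ)) : ℝ :=
  (M.map Prod.snd).sum + ((asks : Multiset ℝ) - M.map Prod.fst).sum

/-- Social welfare of the Best-first allocation. -/
noncomputable def bfWelfare (asks bids : List ℝ) : ℝ :=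
  ((bfRun asks bids).matched.map Prod.snd).sum + (bfRun asks bids).unmatchedAsks.sum

/-- Maximum social welfare over all feasible allocations. -/
noncomputable def OptW (asks bids : List ℝ) : ℝ :=
  sSup {w : ℝ | ∃ M : Multiset (ℝ × ℝ), IsFeasible asks bids M ∧ w = welfare asks M}


section Aux

lemma insertAsc_eq (x : ℝ) (l : List ℝ) :
    insertAsc x l = List.orderedInsert (· ≤ ·) x l := by
  induction l with
  | nil => rfl
  | cons y ys ih => simp [insertAsc, List.orderedInsert, ih]

lemma sortAsc_eq (l : List ℝ) : sortAsc l = List.insertionSort (· ≤ ·) l := by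
  induction l with
  | nil => rfl
  | cons x xs ih =>
      simp [sortAsc, List.insertionSort, insertAsc_eq]
      rw [show xs.foldr insertAsc [] = sortAsc xs from rfl, ih]
      rw [← ih, sortAsc]
      exact congrArg (List.orderedInsert (· ≤ ·) x)
        (congrArg (List.foldr · [] xs) (funext fun a => funext fun l => insertAsc_eq a l))

lemma sortDesc_perm (l : List ℝ) : List.Perm (sortDesc l) l := by
  unfold sortDesc
  rw [sortAsc_eq]
  exact (List.reverse_perm _).trans (List.perm_insertionSort _ l)

lemma sortDesc_pairwise (l : List ℝ) :
    (sortDesc l).Pairwise (fun a b => b ≤ a) := by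
  unfold sortDesc
  rw [sortAsc_eq, List.pairwise_reverse]
  exact List.pairwise_insertionSort _ l

/-- cross sum comparison for lists -/
lemma list_sum_le_of_cross : ∀ (l1 l2 : List ℝ), l1.length = l2.length →
    (∀ x ∈ l1, ∀ y ∈ l2, x ≤ y) → l1.sum ≤ l2.sum := by
  intro l1
  induction l1 with
  | nil =>
      intro l2 h _
      rw [List.length_nil] at h
      rw [(List.length_eq_zero_iff.mp h.symm)]
  | cons a l1 ih =>
      intro l2 h hc
      match l2 with
      | [] => simp at h
      | b :: l2 =>
          simp only [List.sum_cons]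
          have hab : a ≤ b := hc a (by simp) b (by simp)
          have : l1.sum ≤ l2.sum := by
            apply ih l2 (by simpa using h)
            intro x hx y hy
            exact hc x (by simp [hx]) y (by simp [hy])
          linarith

lemma multiset_sum_le_of_cross (s t : Multiset ℝ) (h : Multiset.card s = Multiset.card t)
    (hc : ∀ x ∈ s, ∀ y ∈ t, x ≤ y) : s.sum ≤ t.sum := by
  have hs : s.toList.sum = s.sum := by
    conv_rhs => rw [← s.coe_toList]
    simp
  have ht : t.toList.sum = t.sum := by
    conv_rhs => rw [← t.coe_toList]
    simp
  rw [← hs, ← ht]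
  apply list_sum_le_of_cross
  · simp [h]
  · intro x hx y hy
    exact hc x (by rwa [← Multiset.mem_toList]) y (by rwa [← Multiset.mem_toList])

/-- top-k maximality: any submultiset of `P + Q` with the same cardinality as `P`
has sum at most `P.sum`, provided every element of `Q` is at most every element of `P`. -/
lemma sub_sum_le (P Q T : Multiset ℝ) (hc : ∀ y ∈ P, ∀ x ∈ Q, x ≤ y)
    (hT : T ≤ P + Q) (hcard : Multiset.card T = Multiset.card P) :
    T.sum ≤ P.sum := by
  classical
  set T1 := T ∩ P with hT1
  set T2 := T - P with hT2
  have h12 : T2 + T1 = T := Multiset.sub_add_inter T P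
  have hT1P : T1 ≤ P := Multiset.inter_le_right
  have hT2Q : T2 ≤ Q := by
    rw [Multiset.le_iff_count]
    intro x
    have h1 := Multiset.count_le_of_le x hT
    rw [Multiset.count_add] at h1
    rw [hT2, Multiset.count_sub]
    omega
  have hPsplit : P - T1 + T1 = P := tsub_add_cancel_of_le hT1P
  have hcard2 : Multiset.card T2 = Multiset.card (P - T1) := by
    have c1 : Multiset.card T2 + Multiset.card T1 = Multiset.card T := by
      rw [← Multiset.card_add, h12]
    have c2 : Multiset.card (P - T1) + Multiset.card T1 = Multiset.card P := by
      rw [← Multiset.card_add, hPsplit]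
    omega
  have hsum2 : T2.sum ≤ (P - T1).sum := by
    apply multiset_sum_le_of_cross _ _ hcard2
    intro x hx y hy
    exact hc y (Multiset.mem_of_le (tsub_le_self : P - T1 ≤ P) hy) x (Multiset.mem_of_le hT2Q hx)
  have e1 : T.sum = T2.sum + T1.sum := by rw [← h12, Multiset.sum_add]
  have e2 : P.sum = (P - T1).sum + T1.sum := by
    conv_lhs => rw [← hPsplit]
    rw [Multiset.sum_add]
  linarith

end Aux

/-- The maximum social welfare over all feasible allocations
equals the sum of the `k` largest elements of the combined multiset of ask and
bid values, where `k` is the number of asks. -/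
theorem optimal_welfare_eq_topK (asks bids : List ℝ)
    (ha : ∀ a ∈ asks, 0 ≤ a) (hb : ∀ b ∈ bids, 0 ≤ b) :
    IsGreatest {w : ℝ | ∃ M : Multiset (ℝ × ℝ), IsFeasible asks bids M ∧ w = welfare asks M}
      (((sortDesc (asks ++ bids)).take asks.length).sum) := by
  classical
  set k := asks.length with hk
  set D := sortDesc (asks ++ bids) with hD
  have hperm : List.Perm D (asks ++ bids) := sortDesc_perm _
  have hsort : D.Pairwise (fun a b => b ≤ a) := sortDesc_pairwise _
  have hlenD : D.length = asks.length + bids.length := by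
    rw [hperm.length_eq, List.length_append]
  have hkD : k ≤ D.length := by omega
  -- the top-k and the rest, as multisets
  set Pm : Multiset ℝ := (↑(D.take k) : Multiset ℝ) with hPm
  set Qm : Multiset ℝ := (↑(D.drop k) : Multiset ℝ) with hQm
  have hcross : ∀ y ∈ Pm, ∀ x ∈ Qm, x ≤ y := by
    intro y hy x hx
    rw [hPm, Multiset.mem_coe] at hy
    rw [hQm, Multiset.mem_coe] at hx
    have : D.Pairwise (fun a b => b ≤ a) := hsort
    rw [← List.take_append_drop k D, List.pairwise_append] at this
    exact this.2.2 y hy x hx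
  have hPQ : (asks : Multiset ℝ) + (bids : Multiset ℝ) = Pm + Qm := by
    rw [hPm, hQm, Multiset.coe_add, Multiset.coe_add, Multiset.coe_eq_coe,
      List.take_append_drop]
    exact hperm.symm
  have hcardP : Multiset.card Pm = k := by
    rw [hPm, Multiset.coe_card, List.length_take]
    omega
  have hPsum : Pm.sum = ((sortDesc (asks ++ bids)).take asks.length).sum := by
    rw [hPm, Multiset.sum_coe]
  constructor
  · -- membership: construct the optimal matching
    set A1 : Multiset ℝ := (asks : Multiset ℝ) ∩ Pm with hA1
    set A2 : Multiset ℝ := (asks : Multiset ℝ) - Pm with hA2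
    set B1 : Multiset ℝ := Pm - (asks : Multiset ℝ) with hB1
    have hasks : A2 + A1 = (asks : Multiset ℝ) := Multiset.sub_add_inter _ _
    have hPm' : B1 + Pm ∩ (asks : Multiset ℝ) = Pm := Multiset.sub_add_inter _ _
    have hPmsplit : B1 + A1 = Pm := by
      rw [hA1, Multiset.inter_comm]; exact hPm'
    have hA2Q : A2 ≤ Qm := by
      rw [Multiset.le_iff_count]
      intro x
      have h1 : Multiset.count x ((asks : Multiset ℝ) + (bids : Multiset ℝ)) =
          Multiset.count x (Pm + Qm) := by rw [hPQ]
      simp only [Multiset.count_add] at h1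
      rw [hA2, Multiset.count_sub]
      omega
    have hB1b : B1 ≤ (bids : Multiset ℝ) := by
      rw [Multiset.le_iff_count]
      intro x
      have h1 : Multiset.count x ((asks : Multiset ℝ) + (bids : Multiset ℝ)) =
          Multiset.count x (Pm + Qm) := by rw [hPQ]
      simp only [Multiset.count_add] at h1
      rw [hB1, Multiset.count_sub]
      omega
    have hcardA2B1 : Multiset.card A2 = Multiset.card B1 := by
      have c1 : Multiset.card A2 + Multiset.card A1 = Multiset.card (asks : Multiset ℝ) := by
        rw [← Multiset.card_add, hasks]
      have c2 : Multiset.card B1 + Multiset.card A1 = Multiset.card Pm := by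
        rw [← Multiset.card_add, hPmsplit]
      have c3 : Multiset.card (asks : Multiset ℝ) = k := by rw [Multiset.coe_card]
      omega
    set la := A2.toList with hla
    set lb := B1.toList with hlb
    have hlen : la.length = lb.length := by
      rw [hla, hlb, Multiset.length_toList, Multiset.length_toList, hcardA2B1]
    refine ⟨↑(la.zip lb), ⟨?_, ?_, ?_⟩, ?_⟩
    · -- asks side
      have : (la.zip lb).map Prod.fst = la := List.map_fst_zip (le_of_eq hlen)
      rw [show ((la.zip lb : List (ℝ × ℝ)) : Multiset (ℝ × ℝ)).map Prod.fst
          = ↑((la.zip lb).map Prod.fst) from rfl, this, hla, Multiset.coe_toList]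
      rw [hA2]; exact tsub_le_self
    · have : (la.zip lb).map Prod.snd = lb := List.map_snd_zip (ge_of_eq hlen)
      rw [show ((la.zip lb : List (ℝ × ℝ)) : Multiset (ℝ × ℝ)).map Prod.snd
          = ↑((la.zip lb).map Prod.snd) from rfl, this, hlb, Multiset.coe_toList]
      exact hB1b
    · rintro ⟨a, b⟩ hp
      rw [Multiset.mem_coe] at hp
      obtain ⟨hal, hbl⟩ := List.of_mem_zip hp
      have haQ : a ∈ Qm := Multiset.mem_of_le hA2Q (by rwa [hla, Multiset.mem_toList] at hal)
      have hbB1 : b ∈ B1 := by rwa [hlb, Multiset.mem_toList] at hbl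
      have hbP : b ∈ Pm := Multiset.mem_of_le (show B1 ≤ Pm from hB1 ▸ tsub_le_self) hbB1
      exact hcross b hbP a haQ
    · -- welfare value
      unfold welfare
      have hmf : ((la.zip lb : List (ℝ × ℝ)) : Multiset (ℝ × ℝ)).map Prod.fst = A2 := by
        rw [show ((la.zip lb : List (ℝ × ℝ)) : Multiset (ℝ × ℝ)).map Prod.fst
          = ↑((la.zip lb).map Prod.fst) from rfl, List.map_fst_zip (le_of_eq hlen),
          hla, Multiset.coe_toList]
      have hms : ((la.zip lb : List (ℝ × ℝ)) : Multiset (ℝ × ℝ)).map Prod.snd = B1 := by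
        rw [show ((la.zip lb : List (ℝ × ℝ)) : Multiset (ℝ × ℝ)).map Prod.snd
          = ↑((la.zip lb).map Prod.snd) from rfl, List.map_snd_zip (ge_of_eq hlen),
          hlb, Multiset.coe_toList]
      rw [hmf, hms]
      have : (asks : Multiset ℝ) - A2 = A1 := by
        rw [← hasks, add_tsub_cancel_left]
      rw [this, ← hPsum, ← hPmsplit, Multiset.sum_add]
  · -- upper bound
    rintro w ⟨M, ⟨hfa, hfb, _⟩, rfl⟩
    set T : Multiset ℝ := M.map Prod.snd + ((asks : Multiset ℝ) - M.map Prod.fst) with hT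
    have hwT : welfare asks M = T.sum := by
      rw [hT, Multiset.sum_add]; rfl
    have hcardM : Multiset.card M ≤ k := by
      have := Multiset.card_le_card hfa
      simpa using this
    have hcardT : Multiset.card T = Multiset.card Pm := by
      rw [hT, Multiset.card_add, Multiset.card_map, Multiset.card_sub hfa,
        Multiset.card_map, Multiset.coe_card, hcardP]
      omega
    have hTle : T ≤ Pm + Qm := by
      rw [← hPQ, add_comm (asks : Multiset ℝ)]
      exact add_le_add hfb (tsub_le_self.trans le_rfl)
    rw [hwT, ← hPsum]
    exact sub_sum_le Pm Qm T hcross hTle hcardT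
end

section
/- In M_greedy, a buyer never benefits from delaying his arrival: fix the asks and the other bids in their arrival order, and consider a buyer with value v. If inserting his bid at position p′ in the arrival sequence and at a later position p > p′ (with the relative order of all other bids unchanged), then his utility when arriving at position p′ is at least his utility when arriving at position p; in particular, if he is matched when arriving at position p then he is also matched when arriving at position p′, with a payment that is no larger. -/
/-- Utility of a buyer with true value `trueV` who reports `report` and whose
bid arrives right after the bids `before` have been processed: he is matched
to the minimum unmatched ask `a` at his arrival iff `a ≤ report`, in which
case he pays `a`; otherwise his utility is 0. -/
noncomputable def buyerUtil (asks before : List ℝ) (report trueV : ℝ) : ℝ :=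
  match extractMin (bfRun asks before).unmatchedAsks with
  | some (a, _) => if a ≤ report then trueV - a else 0
  | none => 0

/-- A bid of value `r` arriving right after the bids `before` is matched by
the Best-first allocation. -/
def bfMatchedAt (asks before : List ℝ) (r : ℝ) : Prop :=
  match extractMin (bfRun asks before).unmatchedAsks with
  | some (a, _) => a ≤ r
  | none => False

lemma extractMin_spec : ∀ (l : List ℝ) (a : ℝ) (rest : List ℝ),
    extractMin l = some (a, rest) →
    a ∈ l ∧ (∀ x ∈ l, a ≤ x) ∧ ∀ x ∈ rest, x ∈ l := by
  intro l
  induction l with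
  | nil => intro a rest h; simp [extractMin] at h
  | cons y ys ih =>
    intro a rest h
    rw [extractMin] at h
    cases hm : extractMin ys with
    | none =>
      rw [hm] at h
      simp only [Option.some.injEq, Prod.mk.injEq] at h
      obtain ⟨rfl, rfl⟩ := h
      have hnil : ys = [] := by
        cases ys with
        | nil => rfl
        | cons z zs =>
          rw [extractMin] at hm
          cases h2 : extractMin zs with
          | none => rw [h2] at hm; simp at hm
          | some q =>
            obtain ⟨m, r⟩ := q
            rw [h2] at hm
            by_cases hz : z ≤ m <;> simp [hz] at hm
      subst hnil
      refine ⟨List.mem_singleton.mpr rfl, ?_, by simp⟩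
      intro x hx; rw [List.mem_singleton] at hx; exact hx ▸ le_refl _
    | some p =>
      obtain ⟨m, rest'⟩ := p
      rw [hm] at h
      obtain ⟨hm1, hm2, hm3⟩ := ih m rest' hm
      by_cases hym : y ≤ m
      · simp only [hym, if_true, Option.some.injEq, Prod.mk.injEq] at h
        obtain ⟨rfl, rfl⟩ := h
        refine ⟨List.mem_cons_self, ?_, fun x hx => List.mem_cons_of_mem _ hx⟩
        intro x hx
        rcases List.mem_cons.mp hx with rfl | hx
        · exact le_refl _
        · exact le_trans hym (hm2 x hx)
      · simp only [hym, if_false, Option.some.injEq, Prod.mk.injEq] at h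
        obtain ⟨rfl, rfl⟩ := h
        refine ⟨List.mem_cons_of_mem _ hm1, ?_, ?_⟩
        · intro x hx
          rcases List.mem_cons.mp hx with rfl | hx
          · exact le_of_not_ge hym
          · exact hm2 x hx
        · intro x hx
          rcases List.mem_cons.mp hx with rfl | hx
          · exact List.mem_cons_self
          · exact List.mem_cons_of_mem _ (hm3 x hx)

/-- `MinLe l l'` : whenever `l'` has a minimum, `l` has a minimum that is no larger. -/
def MinLe (l l' : List ℝ) : Prop :=
  ∀ a rest, extractMin l' = some (a, rest) →
    ∃ a' rest', extractMin l = some (a', rest') ∧ a' ≤ a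

lemma minLe_refl (l : List ℝ) : MinLe l l :=
  fun a rest h => ⟨a, rest, h, le_refl _⟩

lemma minLe_trans {l₁ l₂ l₃ : List ℝ} (h12 : MinLe l₁ l₂) (h23 : MinLe l₂ l₃) :
    MinLe l₁ l₃ := by
  intro a rest h
  obtain ⟨a2, r2, h2, hle2⟩ := h23 a rest h
  obtain ⟨a1, r1, h1, hle1⟩ := h12 a2 r2 h2
  exact ⟨a1, r1, h1, le_trans hle1 hle2⟩

lemma minLe_bfStep (s : BfState) (b : ℝ) :
    MinLe s.unmatchedAsks (bfStep s b).unmatchedAsks := by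
  rw [bfStep]
  cases hm : extractMin s.unmatchedAsks with
  | none => exact minLe_refl _
  | some p =>
    obtain ⟨a, rest⟩ := p
    by_cases hab : a ≤ b
    · simp only [hab, if_true]
      intro a2 r2 h2
      obtain ⟨_, hmin, hsub⟩ := extractMin_spec _ _ _ hm
      obtain ⟨hmem2, _, _⟩ := extractMin_spec _ _ _ h2
      exact ⟨a, rest, hm, hmin a2 (hsub a2 hmem2)⟩
    · simp only [hab, if_false]
      exact minLe_refl _

lemma minLe_foldl (l : List ℝ) : ∀ s : BfState,
    MinLe s.unmatchedAsks (l.foldl bfStep s).unmatchedAsks := by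
  induction l with
  | nil => intro s; exact minLe_refl _
  | cons b bs ih =>
    intro s
    exact minLe_trans (minLe_bfStep s b) (ih (bfStep s b))

lemma minLe_bfRun (asks l₁ l₂ : List ℝ) :
    MinLe (bfRun asks l₁).unmatchedAsks (bfRun asks (l₁ ++ l₂)).unmatchedAsks := by
  rw [bfRun, bfRun, List.foldl_append]
  exact minLe_foldl l₂ _

lemma buyerUtil_some {asks before : List ℝ} {a : ℝ} {rest : List ℝ}
    (h : extractMin (bfRun asks before).unmatchedAsks = some (a, rest))
    (report trueV : ℝ) :
    buyerUtil asks before report trueV = if a ≤ report then trueV - a else 0 := by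
  rw [buyerUtil, h]

lemma buyerUtil_none {asks before : List ℝ}
    (h : extractMin (bfRun asks before).unmatchedAsks = none) (report trueV : ℝ) :
    buyerUtil asks before report trueV = 0 := by
  rw [buyerUtil, h]

lemma bfMatchedAt_some {asks before : List ℝ} {a : ℝ} {rest : List ℝ}
    (h : extractMin (bfRun asks before).unmatchedAsks = some (a, rest)) (r : ℝ) :
    bfMatchedAt asks before r ↔ a ≤ r := by
  rw [bfMatchedAt, h]

lemma bfMatchedAt_none {asks before : List ℝ}
    (h : extractMin (bfRun asks before).unmatchedAsks = none) (r : ℝ) :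
    ¬ bfMatchedAt asks before r := by
  rw [bfMatchedAt, h]
  exact not_false

/-- In `M_greedy`, a buyer never benefits from delaying his
arrival: fixing the asks and the other bids `others` in arrival order, if his
bid of value `v` is inserted at position `p'` or at a later position `p`, his
utility at position `p'` is at least his utility at position `p`; in
particular, if he is matched at position `p` then he is also matched at
position `p'`, with a payment that is no larger. -/
theorem buyer_no_benefit_from_delay (asks others : List ℝ)
    (ha : ∀ x ∈ asks, 0 ≤ x) (ho : ∀ x ∈ others, 0 ≤ x)
    (v : ℝ) (hv : 0 ≤ v) (p' p : ℕ) (hpp : p' < p) (hp : p ≤ others.length) :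
    buyerUtil asks (others.take p) v v ≤ buyerUtil asks (others.take p') v v ∧
    (bfMatchedAt asks (others.take p) v →
      bfMatchedAt asks (others.take p') v ∧
      ∀ a ∈ (extractMin (bfRun asks (others.take p)).unmatchedAsks).map Prod.fst,
        ∀ a' ∈ (extractMin (bfRun asks (others.take p')).unmatchedAsks).map Prod.fst,
          a' ≤ a) := by
  have hsplit : others.take p = others.take p' ++ (others.drop p').take (p - p') := by
    rw [← List.take_add]
    congr 1
    omega
  have hML : MinLe (bfRun asks (others.take p')).unmatchedAsks
      (bfRun asks (others.take p)).unmatchedAsks := by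
    rw [hsplit]; exact minLe_bfRun _ _ _
  constructor
  · cases hm : extractMin (bfRun asks (others.take p)).unmatchedAsks with
    | none =>
      rw [buyerUtil_none hm]
      cases hm' : extractMin (bfRun asks (others.take p')).unmatchedAsks with
      | none => rw [buyerUtil_none hm']
      | some q =>
        obtain ⟨a', r'⟩ := q
        rw [buyerUtil_some hm']
        by_cases h : a' ≤ v
        · rw [if_pos h]; linarith
        · rw [if_neg h]
    | some q =>
      obtain ⟨a, r⟩ := q
      obtain ⟨a', r', hm', hle⟩ := hML a r hm
      rw [buyerUtil_some hm, buyerUtil_some hm']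
      by_cases h : a ≤ v
      · rw [if_pos h, if_pos (le_trans hle h)]
        linarith
      · rw [if_neg h]
        by_cases h' : a' ≤ v
        · rw [if_pos h']; linarith
        · rw [if_neg h']
  · intro hmatch
    cases hm : extractMin (bfRun asks (others.take p)).unmatchedAsks with
    | none => exact absurd hmatch (bfMatchedAt_none hm v)
    | some q =>
      obtain ⟨a, r⟩ := q
      have hav : a ≤ v := (bfMatchedAt_some hm v).mp hmatch
      obtain ⟨a', r', hm', hle⟩ := hML a r hm
      refine ⟨(bfMatchedAt_some hm' v).mpr (le_trans hle hav), ?_⟩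
      intro x hx y hy
      rw [hm'] at hy
      simp only [Option.map_some, Option.mem_def, Option.some.injEq] at hx hy
      subst hx; subst hy
      exact hle
end

section
/- M_greedy is individually rational: under truthful reporting, every matched buyer pays at most his valuation and every matched seller receives a payment of at least her valuation; hence every trader's utility is nonnegative. -/
/-- An ask: a (value, seller id) pair. -/
abbrev Ask := ℝ × ℕ

/-- Extract the minimum-value unmatched ask, with a fixed tie-breaking rule
(earlier list positions are preferred). -/
noncomputable def extractMinA : List Ask → Option (Ask × List Ask)
  | [] => none
  | a :: as =>
    match extractMinA as with
    | none => some (a, [])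
    | some (m, rest) => if a.1 ≤ m.1 then some (a, as) else some (m, a :: rest)

/-- State of the Best-first (greedy) allocation with identified asks. -/
structure BfStateA where
  unmatchedAsks : List Ask
  matched : List (Ask × ℝ)
  unmatchedBids : List ℝ

/-- One step of the Best-first allocation: when bid `b` arrives, match it to
the minimum-value unmatched ask `a` if `a.1 ≤ b`; otherwise `b` stays unmatched. -/
noncomputable def bfStepA (s : BfStateA) (b : ℝ) : BfStateA :=
  match extractMinA s.unmatchedAsks with
  | some (a, rest) =>
      if a.1 ≤ b then ⟨rest, s.matched ++ [(a, b)], s.unmatchedBids⟩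
      else ⟨s.unmatchedAsks, s.matched, s.unmatchedBids ++ [b]⟩
  | none => ⟨s.unmatchedAsks, s.matched, s.unmatchedBids ++ [b]⟩

/-- Run the Best-first allocation on the bids in arrival order. -/
noncomputable def bfRunA (asks : List Ask) (bids : List ℝ) : BfStateA :=
  bids.foldl bfStepA ⟨asks, [], []⟩

/-- The ask of seller `id` is matched. -/
def askMatched (st : BfStateA) (id : ℕ) : Prop := ∃ p ∈ st.matched, p.1.2 = id

/-- Highest value among the unmatched bids (0 if there is none). -/
noncomputable def maxBid (l : List ℝ) : ℝ := l.foldr max 0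

/-- The `j`-th matched pair is reachable from the last matched pair:
for every `j ≤ m < last`, the `(m+1)`-st matched ask and the `m`-th matched
bid are matchable. -/
def ReachableFromLast (m : List (Ask × ℝ)) (j : ℕ) : Prop :=
  ∀ i, j ≤ i → i + 1 < m.length → (m.getD (i + 1) default).1.1 ≤ (m.getD i default).2

open scoped Classical in
/-- Payment of the seller whose pair is the `j`-th matched pair:
`min(v(ā_min), max(v(b_last), v(b̄_max)))` if her pair is reachable from the
last matched pair, and `max(v(a_last), v(b̄_max))` otherwise (`v(ā_min) = +∞`
if there is no unmatched ask, handled by dropping the `min`;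
`v(b̄_max) = 0` if there is no unmatched bid). -/
noncomputable def sellerPayAt (st : BfStateA) (j : ℕ) : ℝ :=
  let m := st.matched
  let blast : ℝ := ((m.getLast?).map Prod.snd).getD 0
  let alast : ℝ := ((m.getLast?).map (fun p => p.1.1)).getD 0
  let bmax : ℝ := maxBid st.unmatchedBids
  if ReachableFromLast m j then
    match extractMinA st.unmatchedAsks with
    | some (amin, _) => min amin.1 (max blast bmax)
    | none => max blast bmax
  else max alast bmax

/-- Payment received by seller `id` (0 if her ask is unmatched). -/
noncomputable def sellerPay (st : BfStateA) (id : ℕ) : ℝ :=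
  match st.matched.findIdx? (fun p => p.1.2 == id) with
  | some j => sellerPayAt st j
  | none => 0

open scoped Classical in
/-- Utility of seller `id` with true value `trueV` in `M_greedy`. -/
noncomputable def sellerUtil (asks : List Ask) (bids : List ℝ) (id : ℕ) (trueV : ℝ) : ℝ :=
  let st := bfRunA asks bids
  if askMatched st id then sellerPay st id - trueV else 0

/-- Insert an ask at a given position of the ask list. -/
def insertAskAt (l : List Ask) (pos : ℕ) (x : Ask) : List Ask :=
  l.take pos ++ x :: l.drop pos


/-- helper: membership from `getLast?`. -/
lemma mem_of_getLast?' {α : Type*} {l : List α} {a : α} (h : l.getLast? = some a) : a ∈ l := by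
  cases l with
  | nil => simp at h
  | cons x xs =>
    rw [List.getLast?_eq_getLast (List.cons_ne_nil x xs)] at h
    rw [← Option.some_inj.mp h]
    exact List.getLast_mem _

/-- `extractMinA` returns a permutation split. -/
lemma extractMinA_perm : ∀ {l : List Ask} {m : Ask} {rest : List Ask},
    extractMinA l = some (m, rest) → l.Perm (m :: rest) := by
  intro l
  induction l with
  | nil => intro m rest h; simp [extractMinA] at h
  | cons a as ih =>
    intro m rest h
    unfold extractMinA at h
    cases hm : extractMinA as with
    | none =>
      rw [hm] at h
      cases as with
      | nil =>
        simp at h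
        simp [h.1, h.2]
      | cons b bs => simp [extractMinA] at hm; cases hm' : extractMinA bs <;> simp [hm'] at hm <;> split at hm <;> simp at hm
    | some p =>
      obtain ⟨m', rest'⟩ := p
      rw [hm] at h
      by_cases hle : a.1 ≤ m'.1
      · simp [hle] at h
        rw [← h.1, ← h.2]
      · simp [hle] at h
        obtain ⟨hA, hB⟩ := h
        subst hA; subst hB
        exact ((ih hm).cons a).trans (List.Perm.swap _ _ _)

/-- `extractMinA` returns a minimum. -/
lemma extractMinA_min : ∀ {l : List Ask} {m : Ask} {rest : List Ask},
    extractMinA l = some (m, rest) → ∀ q ∈ rest, m.1 ≤ q.1 := by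
  intro l
  induction l with
  | nil => intro m rest h; simp [extractMinA] at h
  | cons a as ih =>
    intro m rest h q hq
    unfold extractMinA at h
    cases hm : extractMinA as with
    | none =>
      rw [hm] at h; simp at h
      rw [h.2] at hq; simp at hq
    | some p =>
      obtain ⟨m', rest'⟩ := p
      rw [hm] at h
      by_cases hle : a.1 ≤ m'.1
      · simp [hle] at h
        obtain ⟨hA, hB⟩ := h
        subst hA; subst hB
        have hperm := extractMinA_perm hm
        have hq2 : q ∈ m' :: rest' := hperm.mem_iff.mp hq
        rcases List.mem_cons.mp hq2 with hc | hc
        · exact hc ▸ hle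
        · exact hle.trans (ih hm q hc)
      · simp [hle] at h
        obtain ⟨hA, hB⟩ := h
        subst hA; subst hB
        rcases List.mem_cons.mp hq with hc | hc
        · push_neg at hle; exact hc ▸ hle.le
        · exact ih hm q hc

/-- The invariant maintained by the greedy run. -/
def BfInv (s : BfStateA) : Prop :=
  (∀ p ∈ s.matched, p.1.1 ≤ p.2) ∧
  (∀ p ∈ s.matched, ∀ q ∈ s.unmatchedAsks, p.1.1 ≤ q.1) ∧
  (∀ p ∈ s.matched, ∀ q, s.matched.getLast? = some q → p.1.1 ≤ q.1.1)

lemma bfStepA_inv (s : BfStateA) (b : ℝ) (h : BfInv s) : BfInv (bfStepA s b) := by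
  obtain ⟨h1, h2, h3⟩ := h
  unfold bfStepA
  cases hm : extractMinA s.unmatchedAsks with
  | none => exact ⟨h1, h2, h3⟩
  | some p =>
    obtain ⟨a, rest⟩ := p
    by_cases hle : a.1 ≤ b
    · simp only [hle, if_true]
      have hperm := extractMinA_perm hm
      have hamem : a ∈ s.unmatchedAsks := hperm.mem_iff.mpr List.mem_cons_self
      have hrest : ∀ q ∈ rest, q ∈ s.unmatchedAsks := fun q hq =>
        hperm.mem_iff.mpr (List.mem_cons_of_mem a hq)
      refine ⟨?_, ?_, ?_⟩
      · intro p hp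
        rcases List.mem_append.mp hp with hp | hp
        · exact h1 p hp
        · simp at hp; rw [hp]; exact hle
      · intro p hp q hq
        rcases List.mem_append.mp hp with hp | hp
        · exact h2 p hp q (hrest q hq)
        · simp at hp; rw [hp]; exact extractMinA_min hm q hq
      · intro p hp q hq
        simp only [List.getLast?_concat] at hq
        rw [← Option.some_inj.mp hq]
        rcases List.mem_append.mp hp with hp | hp
        · exact h2 p hp a hamem
        · simp at hp; rw [hp]
    · simp only [hle, if_false]
      exact ⟨h1, h2, h3⟩

lemma bfRunA_inv (asks : List Ask) (bids : List ℝ) : BfInv (bfRunA asks bids) := by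
  unfold bfRunA
  have : BfInv (⟨asks, [], []⟩ : BfStateA) := by
    refine ⟨?_, ?_, ?_⟩ <;> intro p hp <;> simp at hp
  generalize (⟨asks, [], []⟩ : BfStateA) = s at this ⊢
  induction bids generalizing s with
  | nil => exact this
  | cons b bs ih => exact ih _ (bfStepA_inv s b this)

/-- `M_greedy` is individually rational: under truthful
reporting, every matched buyer pays (the value of the ask he is matched to) at
most his valuation, and every matched seller receives a payment of at least
her valuation; hence every trader's utility is nonnegative. -/
theorem mgreedy_individually_rational (asks : List Ask) (bids : List ℝ)
    (hids : (asks.map Prod.snd).Nodup)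
    (ha : ∀ p ∈ asks, 0 ≤ p.1) (hb : ∀ b ∈ bids, 0 ≤ b) :
    (∀ p ∈ (bfRunA asks bids).matched, p.1.1 ≤ p.2) ∧
    (∀ p ∈ (bfRunA asks bids).matched, p.1.1 ≤ sellerPay (bfRunA asks bids) p.1.2) := by
  set st := bfRunA asks bids with hst
  obtain ⟨h1, h2, h3⟩ := bfRunA_inv asks bids
  rw [← hst] at h1 h2 h3
  refine ⟨h1, ?_⟩
  intro p hp
  -- matched is nonempty, so getLast? is some
  have hne : st.matched ≠ [] := by
    intro h; rw [h] at hp; simp at hp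
  obtain ⟨q, hq⟩ : ∃ q, st.matched.getLast? = some q :=
    ⟨st.matched.getLast hne, List.getLast?_eq_getLast hne⟩
  have hqmem : q ∈ st.matched := mem_of_getLast?' hq
  have hpq : p.1.1 ≤ q.1.1 := h3 p hp q hq
  have hqb : q.1.1 ≤ q.2 := h1 q hqmem
  -- findIdx? is some
  have hfind : (st.matched.findIdx? (fun r => r.1.2 == p.1.2)).isSome := by
    rw [Option.isSome_iff_ne_none]
    intro hnone
    rw [List.findIdx?_eq_none_iff] at hnone
    simpa using hnone p hp
  obtain ⟨j, hj⟩ := Option.isSome_iff_exists.mp hfind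
  unfold sellerPay
  rw [hj]
  unfold sellerPayAt
  simp only [hq, Option.map_some, Option.getD_some]
  split
  · -- reachable branch
    cases hmin : extractMinA st.unmatchedAsks with
    | some ap =>
      obtain ⟨amin, rest⟩ := ap
      have haminmem : amin ∈ st.unmatchedAsks :=
        (extractMinA_perm hmin).mem_iff.mpr List.mem_cons_self
      exact le_min (h2 p hp amin haminmem) (le_max_of_le_left (hpq.trans hqb))
    | none => exact le_max_of_le_left (hpq.trans hqb)
  · exact le_max_of_le_left hpq
end
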